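/- Let P be a properly leveled irreducible nontrivial lattice polygon with four z-sticks z_{14}, z_{13}, z_{24}, z_{23} and level arcs P_1, P_2, P_3, P_4. Then the union P_2 ∪ P_3 of the two middle-level arcs contains at most eight sticks of x- or y-direction, and if it contains exactly eight, then each of P_1 and P_4 is a single stick. -/
import Mathlib


/-- Realification of an integer lattice point. -/
def toR (v : Fin 3 → ℤ) : Fin 3 → ℝ := fun i => (v i : ℝ)

/-- A closed lattice polygon in `ℤ³`: a cyclic sequence of vertices whose
consecutive differences (sticks) are nonzero, axis-parallel, consecutive
sticks are non-parallel, and distinct sticks meet only in shared endpoints. -/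
structure LatticePolygon where
  n : ℕ
  npos : 0 < n
  vert : ZMod n → (Fin 3 → ℤ)
  inj : Function.Injective vert
  axis : ∀ i : ZMod n, ∃ d : Fin 3,
    (vert (i + 1) - vert i) d ≠ 0 ∧ ∀ d' : Fin 3, d' ≠ d → (vert (i + 1) - vert i) d' = 0
  nonparallel : ∀ i : ZMod n, ∀ d : Fin 3,
    (vert (i + 1) - vert i) d = 0 ∨ (vert (i + 2) - vert (i + 1)) d = 0
  simple : ∀ i j : ZMod n, i ≠ j →
    segment ℝ (toR (vert i)) (toR (vert (i + 1))) ∩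
      segment ℝ (toR (vert j)) (toR (vert (j + 1))) ⊆
    {toR (vert i), toR (vert (i + 1))}

instance (P : LatticePolygon) : NeZero P.n := ⟨P.npos.ne'⟩

namespace LatticePolygon

/-- The displacement vector of the `i`-th stick. -/
def edgeVec (P : LatticePolygon) (i : ZMod P.n) : Fin 3 → ℤ :=
  P.vert (i + 1) - P.vert i

/-- The `i`-th stick is parallel to the `d`-th coordinate axis. -/
def IsDir (P : LatticePolygon) (i : ZMod P.n) (d : Fin 3) : Prop :=
  P.edgeVec i d ≠ 0

/-- The number of sticks of `P` parallel to the `d`-th coordinate axis. -/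
noncomputable def numSticks (P : LatticePolygon) (d : Fin 3) : ℕ :=
  Set.ncard {i : ZMod P.n | P.IsDir i d}

/-- The underlying point set of `P` in `ℝ³`. -/
def carrier (P : LatticePolygon) : Set (Fin 3 → ℝ) :=
  ⋃ i : ZMod P.n, segment ℝ (toR (P.vert i)) (toR (P.vert (i + 1)))

/-- `k` is a `d`-level of `P`: some stick not parallel to the `d`-th axis
lies in the hyperplane where the `d`-th coordinate equals `k`. -/
def IsLevel (P : LatticePolygon) (d : Fin 3) (k : ℤ) : Prop :=
  ∃ i : ZMod P.n, ¬ P.IsDir i d ∧ P.vert i d = k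

/-- The number of endpoints of `d`-sticks lying on the `d`-level `k`. -/
noncomputable def endpointCount (P : LatticePolygon) (d : Fin 3) (k : ℤ) : ℕ :=
  Set.ncard {i : ZMod P.n | P.IsDir i d ∧ P.vert i d = k} +
  Set.ncard {i : ZMod P.n | P.IsDir i d ∧ P.vert (i + 1) d = k}

/-- `P` is properly leveled: every level contains exactly two endpoints of
sticks of the corresponding direction. -/
def ProperlyLeveled (P : LatticePolygon) : Prop :=
  ∀ (d : Fin 3) (k : ℤ), P.IsLevel d k → P.endpointCount d k = 2

end LatticePolygon

/-- Two subsets of `ℝ³` are ambient isotopic. -/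
def AmbientIsotopic (K K' : Set (Fin 3 → ℝ)) : Prop :=
  ∃ H : ℝ → ((Fin 3 → ℝ) ≃ₜ (Fin 3 → ℝ)),
    Continuous (fun q : ℝ × (Fin 3 → ℝ) => H q.1 q.2) ∧
    H 0 = Homeomorph.refl (Fin 3 → ℝ) ∧
    (H 1) '' K = K'

/-- A standard round circle in a plane. -/
noncomputable def unknotCurve : ℝ → (Fin 3 → ℝ) :=
  fun t => ![Real.cos t, Real.sin t, 0]

/-- A standard parametrization of the trefoil knot `3₁`. -/
noncomputable def trefoilCurve : ℝ → (Fin 3 → ℝ) :=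
  fun t => ![Real.sin t + 2 * Real.sin (2 * t),
             Real.cos t - 2 * Real.cos (2 * t),
             - Real.sin (3 * t)]

/-- A standard parametrization of the figure-eight knot `4₁`. -/
noncomputable def figureEightCurve : ℝ → (Fin 3 → ℝ) :=
  fun t => ![(2 + Real.cos (2 * t)) * Real.cos (3 * t),
             (2 + Real.cos (2 * t)) * Real.sin (3 * t),
             Real.sin (4 * t)]

/-- `K` is a trivial knot. -/
def IsUnknot (K : Set (Fin 3 → ℝ)) : Prop :=
  AmbientIsotopic K (Set.range unknotCurve)

/-- `K` is a trefoil knot `3₁`. -/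
def IsTrefoil (K : Set (Fin 3 → ℝ)) : Prop :=
  AmbientIsotopic K (Set.range trefoilCurve)

/-- `K` is a figure-eight knot `4₁`. -/
def IsFigureEight (K : Set (Fin 3 → ℝ)) : Prop :=
  AmbientIsotopic K (Set.range figureEightCurve)

/-- A lattice polygon is irreducible if no ambient isotopic lattice polygon
has fewer sticks. -/
def LatticePolygon.Irreducible (P : LatticePolygon) : Prop :=
  ∀ Q : LatticePolygon, AmbientIsotopic Q.carrier P.carrier → P.n ≤ Q.n

/-- The lattice stick number of (the knot type of) a subset `K` of `ℝ³`. -/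
noncomputable def latticeStickNum (K : Set (Fin 3 → ℝ)) : ℕ :=
  sInf {m : ℕ | ∃ P : LatticePolygon, P.n = m ∧ AmbientIsotopic P.carrier K}

/-- In a properly leveled irreducible nontrivial lattice polygon
with four `z`-sticks, at most 14 sticks in total and `z`-levels
`k1 < k2 < k3 < k4`, the union `P₂ ∪ P₃` of the two middle-level arcs contains
at most eight `x`- or `y`-sticks, and if it contains exactly eight then each of
the boundary arcs `P₁` and `P₄` is a single stick. -/
theorem middle_arcs_at_most_eight_sticks (P : LatticePolygon)
    (hpl : P.ProperlyLeveled) (hirr : P.Irreducible)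
    (hnt : ¬ IsUnknot P.carrier) (hz : P.numSticks 2 = 4) (hn : P.n ≤ 14)
    (k1 k2 k3 k4 : ℤ) (hk : k1 < k2 ∧ k2 < k3 ∧ k3 < k4)
    (hlev : {k : ℤ | P.IsLevel 2 k} = {k1, k2, k3, k4}) :
    Set.ncard {i : ZMod P.n |
        ¬ P.IsDir i 2 ∧ (P.vert i 2 = k2 ∨ P.vert i 2 = k3)} ≤ 8 ∧
    (Set.ncard {i : ZMod P.n |
        ¬ P.IsDir i 2 ∧ (P.vert i 2 = k2 ∨ P.vert i 2 = k3)} = 8 →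
      Set.ncard {i : ZMod P.n | ¬ P.IsDir i 2 ∧ P.vert i 2 = k1} = 1 ∧
      Set.ncard {i : ZMod P.n | ¬ P.IsDir i 2 ∧ P.vert i 2 = k4} = 1) := by
  classical
  have hne : NeZero P.n := ⟨P.npos.ne'⟩
  set A : ℤ → Set (ZMod P.n) := fun k => {i | ¬ P.IsDir i 2 ∧ P.vert i 2 = k} with hA
  have hfin : ∀ k, (A k).Finite := fun k => Set.toFinite _
  have hmem : ∀ i : ZMod P.n, ¬ P.IsDir i 2 →
      P.vert i 2 = k1 ∨ P.vert i 2 = k2 ∨ P.vert i 2 = k3 ∨ P.vert i 2 = k4 := by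
    intro i hi
    have h : P.vert i 2 ∈ {k : ℤ | P.IsLevel 2 k} := ⟨i, hi, rfl⟩
    rw [hlev] at h
    simpa using h
  have hdisj : ∀ k k' : ℤ, k ≠ k' → Disjoint (A k) (A k') := by
    intro k k' hkk
    rw [Set.disjoint_left]
    rintro i ⟨_, h1⟩ ⟨_, h2⟩
    exact hkk (h1.symm.trans h2)
  obtain ⟨h12, h23, h34⟩ := hk
  have ne12 : k1 ≠ k2 := h12.ne
  have ne13 : k1 ≠ k3 := (h12.trans h23).ne
  have ne14 : k1 ≠ k4 := ((h12.trans h23).trans h34).ne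
  have ne23 : k2 ≠ k3 := h23.ne
  have ne24 : k2 ≠ k4 := (h23.trans h34).ne
  have ne34 : k3 ≠ k4 := h34.ne
  -- the set of non-z sticks
  have hunion : {i : ZMod P.n | ¬ P.IsDir i 2} = A k1 ∪ (A k2 ∪ A k3) ∪ A k4 := by
    ext i
    simp only [Set.mem_setOf_eq, Set.mem_union, hA]
    constructor
    · intro hi
      rcases hmem i hi with h | h | h | h
      · exact Or.inl (Or.inl ⟨hi, h⟩)
      · exact Or.inl (Or.inr (Or.inl ⟨hi, h⟩))
      · exact Or.inl (Or.inr (Or.inr ⟨hi, h⟩))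
      · exact Or.inr ⟨hi, h⟩
    · rintro ((⟨h, _⟩ | (⟨h, _⟩ | ⟨h, _⟩)) | ⟨h, _⟩) <;> exact h
  -- total count
  have hcompl : {i : ZMod P.n | ¬ P.IsDir i 2} = {i : ZMod P.n | P.IsDir i 2}ᶜ := by
    ext i; simp
  have hcard : Set.ncard {i : ZMod P.n | P.IsDir i 2} +
      Set.ncard {i : ZMod P.n | ¬ P.IsDir i 2} = P.n := by
    rw [hcompl, Set.ncard_add_ncard_compl]
    simp [Nat.card_eq_fintype_card]
  have hz4 : Set.ncard {i : ZMod P.n | P.IsDir i 2} = 4 := hz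
  have hdisj23 : Disjoint (A k2) (A k3) := hdisj _ _ ne23
  have hdisj1_23 : Disjoint (A k1) (A k2 ∪ A k3) :=
    Set.disjoint_union_right.mpr ⟨hdisj _ _ ne12, hdisj _ _ ne13⟩
  have hdisj123_4 : Disjoint (A k1 ∪ (A k2 ∪ A k3)) (A k4) :=
    Set.disjoint_union_left.mpr
      ⟨hdisj _ _ ne14, Set.disjoint_union_left.mpr ⟨hdisj _ _ ne24, hdisj _ _ ne34⟩⟩
  have hsum : Set.ncard {i : ZMod P.n | ¬ P.IsDir i 2} =
      (A k1).ncard + ((A k2).ncard + (A k3).ncard) + (A k4).ncard := by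
    rw [hunion, Set.ncard_union_eq hdisj123_4 (Set.toFinite _) (Set.toFinite _),
      Set.ncard_union_eq hdisj1_23 (Set.toFinite _) (Set.toFinite _),
      Set.ncard_union_eq hdisj23 (Set.toFinite _) (Set.toFinite _)]
  -- the middle set
  have hmid : {i : ZMod P.n | ¬ P.IsDir i 2 ∧ (P.vert i 2 = k2 ∨ P.vert i 2 = k3)} =
      A k2 ∪ A k3 := by
    ext i
    simp only [Set.mem_setOf_eq, Set.mem_union, hA]
    tauto
  have hmidcard : Set.ncard {i : ZMod P.n |
      ¬ P.IsDir i 2 ∧ (P.vert i 2 = k2 ∨ P.vert i 2 = k3)} =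
      (A k2).ncard + (A k3).ncard := by
    rw [hmid, Set.ncard_union_eq hdisj23 (Set.toFinite _) (Set.toFinite _)]
  -- extreme levels are nonempty
  have hlevmem : ∀ k ∈ ({k1, k2, k3, k4} : Set ℤ), 1 ≤ (A k).ncard := by
    intro k hkmem
    have hiso : P.IsLevel 2 k := by
      have : k ∈ {k : ℤ | P.IsLevel 2 k} := by rw [hlev]; exact hkmem
      exact this
    obtain ⟨i, hi, hv⟩ := hiso
    have : (A k).Nonempty := ⟨i, hi, hv⟩
    exact (Set.ncard_pos (hfin k)).mpr this
  have ha1 : 1 ≤ (A k1).ncard := hlevmem k1 (by simp)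
  have ha4 : 1 ≤ (A k4).ncard := hlevmem k4 (by simp)
  -- conclusion with arithmetic
  have hAk1 : (A k1) = {i : ZMod P.n | ¬ P.IsDir i 2 ∧ P.vert i 2 = k1} := rfl
  have hAk4 : (A k4) = {i : ZMod P.n | ¬ P.IsDir i 2 ∧ P.vert i 2 = k4} := rfl
  rw [hmidcard]
  constructor
  · omega
  · intro h8
    rw [← hAk1, ← hAk4]
    omega
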